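/- If the sequence {M u_{[k−n,k]}}_{k=n}^{N−1} is K_u-PE of order 1 for some symmetric positive definite K_u ∈ ℝ^{p×p}, then for every initial state x_0 ∈ ℝ^n, the output sequence {y_k}_{k=0}^{N−1} generated by the system from x_0 under input {u_k}_{k=0}^{N−1} is K_y-PE of order 1 with K_y = K_u/(n+1), i.e., Σ_{k=0}^{N−1} y_k y_k^T ⪰ (1/(n+1)) K_u. -/

import Mathlib

open Matrix Finset

noncomputable def stateSeq {n m : ℕ} (A : Matrix (Fin n) (Fin n) ℝ) (B : Matrix (Fin n) (Fin m) ℝ)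
    (x0 : Fin n → ℝ) (u : ℕ → Fin m → ℝ) : ℕ → Fin n → ℝ
  | 0 => x0
  | k + 1 => A.mulVec (stateSeq A B x0 u k) + B.mulVec (u k)

/-- Output sequence `y_k = C x_k + D u_k` of the LTI system started at `x0` with input `u`. -/
noncomputable def outputSeq {n m p : ℕ} (A : Matrix (Fin n) (Fin n) ℝ) (B : Matrix (Fin n) (Fin m) ℝ)
    (C : Matrix (Fin p) (Fin n) ℝ) (D : Matrix (Fin p) (Fin m) ℝ)
    (x0 : Fin n → ℝ) (u : ℕ → Fin m → ℝ) (k : ℕ) : Fin p → ℝ :=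
  C.mulVec (stateSeq A B x0 u k) + D.mulVec (u k)

/-- Markov parameters: `Γ_0 = D`, `Γ_j = C A^(j-1) B` for `j ≥ 1`. -/
noncomputable def Markov {n m p : ℕ} (A : Matrix (Fin n) (Fin n) ℝ) (B : Matrix (Fin n) (Fin m) ℝ)
    (C : Matrix (Fin p) (Fin n) ℝ) (D : Matrix (Fin p) (Fin m) ℝ) : ℕ → Matrix (Fin p) (Fin m) ℝ
  | 0 => D
  | j + 1 => C * A ^ j * B

/-- The matrix `M = [M_n ⋯ M_1 M_0]` with `M_j = ∑_{q=0}^j d_{j-q} Γ_q`; the block at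
block-column `i` (from the left, `i = 0,…,n`) is `M_{n-i}`. -/
noncomputable def Mmat {n m p : ℕ} (A : Matrix (Fin n) (Fin n) ℝ) (B : Matrix (Fin n) (Fin m) ℝ)
    (C : Matrix (Fin p) (Fin n) ℝ) (D : Matrix (Fin p) (Fin m) ℝ) (d : ℕ → ℝ) :
    Matrix (Fin p) (Fin (n + 1) × Fin m) ℝ :=
  Matrix.of fun i jl =>
    (∑ q ∈ Finset.range ((n - (jl.1 : ℕ)) + 1),
      d ((n - (jl.1 : ℕ)) - q) • Markov A B C D q) i jl.2

/- ## Auxiliary lemmas -/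

lemma sum_mulVec' {p m : ℕ} {ι : Type*} (s : Finset ι) (M : ι → Matrix (Fin p) (Fin m) ℝ)
    (v : Fin m → ℝ) : (∑ i ∈ s, M i) *ᵥ v = ∑ i ∈ s, (M i) *ᵥ v := by
  classical
  induction s using Finset.induction with
  | empty => simp [Matrix.mulVec]
  | insert _ _ h ih => simp [Finset.sum_insert h, Matrix.add_mulVec, ih]

lemma mulVec_sum' {p m : ℕ} {ι : Type*} (s : Finset ι) (M : Matrix (Fin p) (Fin m) ℝ)
    (v : ι → Fin m → ℝ) : M *ᵥ (∑ i ∈ s, v i) = ∑ i ∈ s, M *ᵥ v i := by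
  classical
  induction s using Finset.induction with
  | empty => simp [Matrix.mulVec]
  | insert _ _ h ih => simp [Finset.sum_insert h, Matrix.mulVec_add, ih]

lemma dotProduct_sum' {p : ℕ} {ι : Type*} (s : Finset ι) (x : Fin p → ℝ) (v : ι → Fin p → ℝ) :
    x ⬝ᵥ (∑ i ∈ s, v i) = ∑ i ∈ s, x ⬝ᵥ v i := by
  classical
  induction s using Finset.induction with
  | empty => simp [dotProduct]
  | insert _ _ h ih => simp [Finset.sum_insert h, dotProduct_add, ih]

lemma sum_dotProduct' {p : ℕ} {ι : Type*} (s : Finset ι) (x : Fin p → ℝ) (v : ι → Fin p → ℝ) :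
    (∑ i ∈ s, v i) ⬝ᵥ x = ∑ i ∈ s, v i ⬝ᵥ x := by
  classical
  induction s using Finset.induction with
  | empty => simp [dotProduct]
  | insert _ _ h ih => simp [Finset.sum_insert h, add_dotProduct, ih]

lemma vecMulVec_mulVec' {p : ℕ} (a b x : Fin p → ℝ) :
    (vecMulVec a b) *ᵥ x = (b ⬝ᵥ x) • a := by
  funext i
  simp [vecMulVec, Matrix.mulVec, dotProduct, Finset.mul_sum, Finset.sum_mul, mul_assoc,
    mul_comm, mul_left_comm]

lemma quadform_sum {p : ℕ} {ι : Type*} (s : Finset ι) (v : ι → Fin p → ℝ) (x : Fin p → ℝ) :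
    x ⬝ᵥ ((∑ k ∈ s, vecMulVec (v k) (v k)) *ᵥ x) = ∑ k ∈ s, (v k ⬝ᵥ x) ^ 2 := by
  rw [sum_mulVec', dotProduct_sum']
  refine Finset.sum_congr rfl fun k _ => ?_
  rw [vecMulVec_mulVec', dotProduct_smul, smul_eq_mul, sq, dotProduct_comm x (v k)]

/-- State expansion from time `k`. -/
lemma state_shift {n m : ℕ} (A : Matrix (Fin n) (Fin n) ℝ) (B : Matrix (Fin n) (Fin m) ℝ)
    (x0 : Fin n → ℝ) (u : ℕ → Fin m → ℝ) (k : ℕ) : ∀ i : ℕ,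
    stateSeq A B x0 u (k + i) =
      (A ^ i) *ᵥ stateSeq A B x0 u k +
        ∑ s ∈ Finset.range i, (A ^ (i - 1 - s) * B) *ᵥ u (k + s) := by
  intro i
  induction i with
  | zero => simp [Matrix.one_mulVec]
  | succ i ih =>
    show A *ᵥ stateSeq A B x0 u (k + i) + B *ᵥ u (k + i) = _
    rw [ih, Matrix.mulVec_add, mulVec_sum', Finset.sum_range_succ,
      show i + 1 - 1 - i = 0 by omega, pow_zero, Matrix.one_mul, add_assoc]
    congr 1
    · rw [Matrix.mulVec_mulVec, ← pow_succ']
    congr 1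
    refine Finset.sum_congr rfl fun s hs => ?_
    have hs' : s < i := Finset.mem_range.mp hs
    rw [Matrix.mulVec_mulVec, ← Matrix.mul_assoc, ← pow_succ',
      show i - 1 - s + 1 = i + 1 - 1 - s by omega]

lemma markov_eq {n m p : ℕ} (A : Matrix (Fin n) (Fin n) ℝ) (B : Matrix (Fin n) (Fin m) ℝ)
    (C : Matrix (Fin p) (Fin n) ℝ) (D : Matrix (Fin p) (Fin m) ℝ) {i s : ℕ} (h : s < i) :
    C * A ^ (i - 1 - s) * B = Markov A B C D (i - s) := by
  obtain ⟨t, ht⟩ : ∃ t, i - s = t + 1 := ⟨i - s - 1, by omega⟩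
  rw [ht, show i - 1 - s = t by omega]
  rfl

/-- Key identity: `M u_{[k,k+n]} = ∑_{i=0}^n d_{n-i} y_{k+i}`. -/
lemma key_identity {n m p : ℕ} (A : Matrix (Fin n) (Fin n) ℝ) (B : Matrix (Fin n) (Fin m) ℝ)
    (C : Matrix (Fin p) (Fin n) ℝ) (D : Matrix (Fin p) (Fin m) ℝ) (d : ℕ → ℝ)
    (hCayley : ∑ j ∈ Finset.range (n + 1), d j • A ^ (n - j) = 0)
    (x0 : Fin n → ℝ) (u : ℕ → Fin m → ℝ) (k : ℕ) :
    (Mmat A B C D d).mulVec (fun il : Fin (n + 1) × Fin m => u (k + (il.1 : ℕ)) il.2) =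
      ∑ i ∈ Finset.range (n + 1), d (n - i) • outputSeq A B C D x0 u (k + i) := by
  -- Step 1: LHS as a sum of block actions
  have hL : (Mmat A B C D d).mulVec (fun il : Fin (n + 1) × Fin m => u (k + (il.1 : ℕ)) il.2) =
      ∑ s ∈ Finset.range (n + 1),
        (∑ q ∈ Finset.range ((n - s) + 1), d ((n - s) - q) • Markov A B C D q) *ᵥ u (k + s) := by
    funext r
    rw [Finset.sum_apply, ← Fin.sum_univ_eq_sum_range
      (fun s => ((∑ q ∈ Finset.range ((n - s) + 1), d ((n - s) - q) • Markov A B C D q) *ᵥ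
        u (k + s)) r) (n + 1)]
    simp only [Matrix.mulVec, dotProduct, Mmat, Matrix.of_apply, Fintype.sum_prod_type]
  rw [hL]
  -- Step 2: expand outputs
  have hy : ∀ i ∈ Finset.range (n + 1),
      d (n - i) • outputSeq A B C D x0 u (k + i) =
        d (n - i) • ((C * A ^ i) *ᵥ stateSeq A B x0 u k) +
          ∑ s ∈ Finset.range (i + 1), d (n - i) • (Markov A B C D (i - s) *ᵥ u (k + s)) := by
    intro i hi
    have hyi : outputSeq A B C D x0 u (k + i) =
        (C * A ^ i) *ᵥ stateSeq A B x0 u k +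
          ∑ s ∈ Finset.range (i + 1), Markov A B C D (i - s) *ᵥ u (k + s) := by
      rw [outputSeq, state_shift, Matrix.mulVec_add, Matrix.mulVec_mulVec, mulVec_sum',
        Finset.sum_range_succ, Nat.sub_self, show Markov A B C D 0 = D from rfl, add_assoc]
      congr 2
      refine Finset.sum_congr rfl fun s hs => ?_
      rw [Matrix.mulVec_mulVec, ← Matrix.mul_assoc,
        markov_eq A B C D (Finset.mem_range.mp hs)]
    rw [hyi, smul_add, Finset.smul_sum]
  rw [Finset.sum_congr rfl hy, Finset.sum_add_distrib]
  -- the free-response part vanishes by Cayley–Hamilton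
  have h1 : ∑ i ∈ Finset.range (n + 1), d (n - i) • A ^ i = 0 := by
    have h2 : ∑ i ∈ Finset.range (n + 1), d (n - i) • A ^ i =
        ∑ i ∈ Finset.range (n + 1), d (n - i) • A ^ (n - (n - i)) := by
      refine Finset.sum_congr rfl fun i hi => ?_
      rw [Nat.sub_sub_self (Nat.lt_succ_iff.mp (Finset.mem_range.mp hi))]
    rw [h2]
    have := Finset.sum_range_reflect (fun j => d j • A ^ (n - j)) (n + 1)
    simp only [Nat.add_sub_cancel] at this
    rw [this, hCayley]
  have h0 : ∑ i ∈ Finset.range (n + 1), d (n - i) • (C * A ^ i) = 0 := by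
    have hr : C * (∑ i ∈ Finset.range (n + 1), d (n - i) • A ^ i) =
        ∑ i ∈ Finset.range (n + 1), d (n - i) • (C * A ^ i) := by
      rw [Matrix.mul_sum]
      exact Finset.sum_congr rfl fun i _ => Matrix.mul_smul _ _ _
    rw [← hr, h1, Matrix.mul_zero]
  have hfree : ∑ i ∈ Finset.range (n + 1),
      d (n - i) • ((C * A ^ i) *ᵥ stateSeq A B x0 u k) = 0 := by
    have heq : ∑ i ∈ Finset.range (n + 1), d (n - i) • ((C * A ^ i) *ᵥ stateSeq A B x0 u k) =
        (∑ i ∈ Finset.range (n + 1), d (n - i) • (C * A ^ i)) *ᵥ stateSeq A B x0 u k := by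
      rw [sum_mulVec']
      exact Finset.sum_congr rfl fun i _ => (Matrix.smul_mulVec _ _ _).symm
    rw [heq, h0]
    exact Matrix.zero_mulVec _
  rw [hfree, zero_add]
  -- triangle swap
  have hswap : ∑ i ∈ Finset.range (n + 1), ∑ s ∈ Finset.range (i + 1),
      d (n - i) • (Markov A B C D (i - s) *ᵥ u (k + s)) =
      ∑ s ∈ Finset.range (n + 1), ∑ i ∈ Finset.Ico s (n + 1),
        d (n - i) • (Markov A B C D (i - s) *ᵥ u (k + s)) := by
    simp only [Finset.range_eq_Ico]
    exact (Finset.sum_Ico_Ico_comm 0 (n + 1)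
      (fun a b => d (n - b) • (Markov A B C D (b - a) *ᵥ u (k + a)))).symm
  rw [hswap]
  refine (Finset.sum_congr rfl fun s hs => ?_).symm
  have hsn : s ≤ n := Nat.lt_succ_iff.mp (Finset.mem_range.mp hs)
  rw [sum_mulVec', Finset.sum_Ico_eq_sum_range, show n + 1 - s = (n - s) + 1 by omega]
  refine (Finset.sum_congr rfl fun q hq => ?_).symm
  rw [Matrix.smul_mulVec, show n - (s + q) = (n - s) - q by omega,
    show s + q - s = q by omega]

/-- Nonnegative terms: shifted partial sum is bounded by full sum. -/
lemma shift_sum_le {N n : ℕ} (hnN : n < N) (g : ℕ → ℝ) (hg : ∀ t, 0 ≤ g t) (i : ℕ)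
    (hi : i ≤ n) : ∑ k ∈ Finset.range (N - n), g (k + i) ≤ ∑ t ∈ Finset.range N, g t := by
  have h1 : ∑ k ∈ Finset.range (N - n), g (k + i) = ∑ t ∈ Finset.Ico i (i + (N - n)), g t := by
    rw [Finset.sum_Ico_eq_sum_range]
    simp only [Nat.add_sub_cancel_left]
    exact Finset.sum_congr rfl fun k _ => by rw [add_comm]
  rw [h1]
  refine Finset.sum_le_sum_of_subset_of_nonneg ?_ fun t _ _ => hg t
  intro t ht
  simp only [Finset.mem_Ico, Finset.mem_range] at ht ⊢
  omega

set_option maxHeartbeats 1000000 in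
/-- if `{M u_{[k-n,k]}}_{k=n}^{N-1}` is `K_u`-PE of order 1, then for every initial
state the output is `K_y`-PE of order 1 with `K_y = K_u/(n+1)`. -/
theorem stmt_4 {n m p : ℕ} (hn : 0 < n) (hm : 0 < m) (hp : 0 < p)
    (A : Matrix (Fin n) (Fin n) ℝ) (B : Matrix (Fin n) (Fin m) ℝ)
    (C : Matrix (Fin p) (Fin n) ℝ) (D : Matrix (Fin p) (Fin m) ℝ)
    (d : ℕ → ℝ) (hd0 : d 0 ≠ 0)
    (hdnorm : ∑ j ∈ Finset.range (n + 1), d j ^ 2 = 1)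
    (hCayley : ∑ j ∈ Finset.range (n + 1), d j • A ^ (n - j) = 0)
    (N : ℕ) (hN : n < N) (u : ℕ → Fin m → ℝ)
    (Ku : Matrix (Fin p) (Fin p) ℝ) (hKu : Ku.PosDef)
    (hPE : ((∑ k ∈ Finset.range (N - n),
        vecMulVec
          ((Mmat A B C D d).mulVec fun il : Fin (n + 1) × Fin m => u (k + (il.1 : ℕ)) il.2)
          ((Mmat A B C D d).mulVec fun il : Fin (n + 1) × Fin m => u (k + (il.1 : ℕ)) il.2)) -
        Ku).PosSemidef) :
    ∀ x0 : Fin n → ℝ,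
      ((∑ k ∈ Finset.range N,
          vecMulVec (outputSeq A B C D x0 u k) (outputSeq A B C D x0 u k)) -
        ((1 : ℝ) / (n + 1)) • Ku).PosSemidef := by
  intro x0
  refine Matrix.PosSemidef.of_dotProduct_mulVec_nonneg ?_ ?_
  · -- Hermitian
    have h1 : (∑ k ∈ Finset.range N,
        vecMulVec (outputSeq A B C D x0 u k) (outputSeq A B C D x0 u k)).IsHermitian := by
      show _ᴴ = _
      ext i j
      simp [Matrix.conjTranspose_apply, Matrix.sum_apply, Matrix.vecMulVec_apply, mul_comm]
    have h2 : (((1 : ℝ) / (n + 1)) • Ku).IsHermitian := by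
      show _ᴴ = _
      rw [Matrix.conjTranspose_smul, hKu.1.eq]
      simp
    exact h1.sub h2
  · -- quadratic forms
    intro x
    have hstar : star x = x := by simp
    have hPE2 := hPE.dotProduct_mulVec_nonneg x
    rw [hstar, Matrix.sub_mulVec, dotProduct_sub, quadform_sum] at hPE2
    -- Cauchy–Schwarz per k
    have hCS : ∀ k, ((Mmat A B C D d).mulVec
          (fun il : Fin (n + 1) × Fin m => u (k + (il.1 : ℕ)) il.2) ⬝ᵥ x) ^ 2 ≤
        ∑ i ∈ Finset.range (n + 1), (outputSeq A B C D x0 u (k + i) ⬝ᵥ x) ^ 2 := by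
      intro k
      rw [key_identity A B C D d hCayley x0 u k, sum_dotProduct']
      have hdot : ∀ i ∈ Finset.range (n + 1),
          (d (n - i) • outputSeq A B C D x0 u (k + i)) ⬝ᵥ x =
            d (n - i) * (outputSeq A B C D x0 u (k + i) ⬝ᵥ x) := by
        intro i _
        rw [smul_dotProduct, smul_eq_mul]
      rw [Finset.sum_congr rfl hdot]
      calc (∑ i ∈ Finset.range (n + 1), d (n - i) * (outputSeq A B C D x0 u (k + i) ⬝ᵥ x)) ^ 2
          ≤ (∑ i ∈ Finset.range (n + 1), d (n - i) ^ 2) *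
            (∑ i ∈ Finset.range (n + 1), (outputSeq A B C D x0 u (k + i) ⬝ᵥ x) ^ 2) :=
            Finset.sum_mul_sq_le_sq_mul_sq _ _ _
        _ = ∑ i ∈ Finset.range (n + 1), (outputSeq A B C D x0 u (k + i) ⬝ᵥ x) ^ 2 := by
            have hdr : ∑ i ∈ Finset.range (n + 1), d (n - i) ^ 2 = 1 := by
              have := Finset.sum_range_reflect (fun j => d j ^ 2) (n + 1)
              simp only [Nat.add_sub_cancel] at this
              rw [this, hdnorm]
            rw [hdr, one_mul]
    -- counting
    have hcount : ∑ k ∈ Finset.range (N - n), ∑ i ∈ Finset.range (n + 1),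
          (outputSeq A B C D x0 u (k + i) ⬝ᵥ x) ^ 2 ≤
        (n + 1 : ℝ) * ∑ t ∈ Finset.range N, (outputSeq A B C D x0 u t ⬝ᵥ x) ^ 2 := by
      rw [Finset.sum_comm]
      calc ∑ i ∈ Finset.range (n + 1), ∑ k ∈ Finset.range (N - n),
            (outputSeq A B C D x0 u (k + i) ⬝ᵥ x) ^ 2
          ≤ ∑ i ∈ Finset.range (n + 1), ∑ t ∈ Finset.range N,
            (outputSeq A B C D x0 u t ⬝ᵥ x) ^ 2 := by
            refine Finset.sum_le_sum fun i hi => ?_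
            exact shift_sum_le hN (fun t => (outputSeq A B C D x0 u t ⬝ᵥ x) ^ 2)
              (fun t => sq_nonneg _) i
              (Nat.lt_succ_iff.mp (Finset.mem_range.mp hi))
        _ = (n + 1 : ℝ) * ∑ t ∈ Finset.range N, (outputSeq A B C D x0 u t ⬝ᵥ x) ^ 2 := by
            rw [Finset.sum_const, Finset.card_range, nsmul_eq_mul]
            push_cast
            ring
    have hchain : x ⬝ᵥ (Ku *ᵥ x) ≤
        (n + 1 : ℝ) * ∑ t ∈ Finset.range N, (outputSeq A B C D x0 u t ⬝ᵥ x) ^ 2 := by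
      calc x ⬝ᵥ (Ku *ᵥ x)
          ≤ ∑ k ∈ Finset.range (N - n), ((Mmat A B C D d).mulVec
            (fun il : Fin (n + 1) × Fin m => u (k + (il.1 : ℕ)) il.2) ⬝ᵥ x) ^ 2 :=
            sub_nonneg.mp hPE2
        _ ≤ ∑ k ∈ Finset.range (N - n), ∑ i ∈ Finset.range (n + 1),
            (outputSeq A B C D x0 u (k + i) ⬝ᵥ x) ^ 2 :=
            Finset.sum_le_sum fun k _ => hCS k
        _ ≤ _ := hcount
    rw [hstar, Matrix.sub_mulVec, dotProduct_sub, quadform_sum, Matrix.smul_mulVec,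
      dotProduct_smul, smul_eq_mul, sub_nonneg]
    have hpos : (0 : ℝ) < n + 1 := by positivity
    rw [div_mul_eq_mul_div, one_mul, div_le_iff₀ hpos]
    calc x ⬝ᵥ (Ku *ᵥ x)
        ≤ (n + 1 : ℝ) * ∑ t ∈ Finset.range N, (outputSeq A B C D x0 u t ⬝ᵥ x) ^ 2 := hchain
      _ = (∑ t ∈ Finset.range N, (outputSeq A B C D x0 u t ⬝ᵥ x) ^ 2) * (n + 1 : ℝ) := by ring
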